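/- arXiv:2404.02714 — 2 statements merged into one kernel-verified Lean document; each statement's English description precedes it below -/
import Mathlib

section
/- Let n ≥ k ≥ 2 be positive integers. Then n ≥ R(k) holds if and only if for every real number q and every integer m, Σ_{G,H} (-1)^{|E(H)|} cos( (π q (n-2)!/(k!(n-k)!)) · (4|E(G)| − n(n−1)) + (4πm/(k(k−1))) · i(G,H) ) = 0, where the summation is over all simple graphs G on the vertex set [n] and all k-uniform hypergraphs H on the vertex set [n]. -/
open Finset

lemma comap_compl_emb {α β : Type*} (f : α ↪ β) (G : SimpleGraph β) :
    Gᶜ.comap ⇑f = (G.comap ⇑f)ᶜ := by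
  ext a b
  simp [SimpleGraph.comap, f.injective.ne_iff]

lemma isNClique_comap_map {α β : Type*} (f : α ↪ β) (G : SimpleGraph β)
    {c : ℕ} {s : Finset α} (h : (G.comap ⇑f).IsNClique c s) :
    G.IsNClique c (s.map f) := by
  constructor
  · intro x hx y hy hxy
    simp only [coe_map, Set.mem_image, mem_coe] at hx hy
    obtain ⟨a, ha, rfl⟩ := hx
    obtain ⟨b, hb, rfl⟩ := hy
    exact h.1 ha hb (fun h' => hxy (by rw [h']))
  · rw [card_map, h.2]

theorem ramsey_aux : ∀ p s t : ℕ, s + t ≤ p → ∃ n : ℕ,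
    ∀ (V : Type) [Fintype V] [DecidableEq V], n ≤ Fintype.card V →
      ∀ G : SimpleGraph V,
        (∃ A : Finset V, G.IsNClique s A) ∨ (∃ A : Finset V, Gᶜ.IsNClique t A) := by
  intro p
  induction p with
  | zero =>
    intro s t hst
    refine ⟨0, fun V _ _ _ G => Or.inl ⟨∅, ?_⟩⟩
    have hs : s = 0 := by omega
    simp [hs, SimpleGraph.isNClique_empty]
  | succ p ih =>
    intro s t hst
    match s, t with
    | 0, t => exact ⟨0, fun V _ _ _ G => Or.inl ⟨∅, by simp [SimpleGraph.isNClique_empty]⟩⟩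
    | s, 0 => exact ⟨0, fun V _ _ _ G => Or.inr ⟨∅, by simp [SimpleGraph.isNClique_empty]⟩⟩
    | s+1, t+1 =>
      obtain ⟨n1, h1⟩ := ih s (t+1) (by omega)
      obtain ⟨n2, h2⟩ := ih (s+1) t (by omega)
      refine ⟨n1 + n2 + 1, fun V _ _ hcard G => ?_⟩
      classical
      have hne : Nonempty V := by
        rw [← Fintype.card_pos_iff]; omega
      obtain ⟨v⟩ := hne
      set N : Finset V := (univ.erase v).filter (fun w => G.Adj v w) with hN
      set Nc : Finset V := (univ.erase v).filter (fun w => ¬ G.Adj v w) with hNc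
      have hcards : N.card + Nc.card = Fintype.card V - 1 := by
        rw [hN, hNc, card_filter_add_card_filter_not]
        simp [card_erase_of_mem]
      have hcases : n1 ≤ N.card ∨ n2 ≤ Nc.card := by omega
      cases hcases with
      | inl hn1 =>
        have hcard' : n1 ≤ Fintype.card (↥(N : Finset V)) := by
          rwa [Fintype.card_coe]
        have := h1 ↥N hcard' (G.comap ((Function.Embedding.subtype _) : {x // x ∈ N} ↪ V))
        cases this with
        | inl h =>
          obtain ⟨A, hA⟩ := h
          have hB := isNClique_comap_map _ _ hA
          set B := A.map (Function.Embedding.subtype _) with hBdef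
          have hBN : ∀ b ∈ B, b ∈ N := by
            intro b hb
            simp only [hBdef, mem_map, Function.Embedding.coe_subtype] at hb
            obtain ⟨a, _, rfl⟩ := hb
            exact a.2
          have hvB : v ∉ B := by
            intro hv
            have := hBN v hv
            rw [hN] at this
            simp at this
          refine Or.inl ⟨insert v B, SimpleGraph.IsNClique.insert hB ?_⟩
          intro b hb
          have := hBN b hb
          rw [hN] at this
          exact (mem_filter.1 this).2
        | inr h =>
          obtain ⟨A, hA⟩ := h
          rw [← comap_compl_emb] at hA
          exact Or.inr ⟨A.map (Function.Embedding.subtype _), isNClique_comap_map _ _ hA⟩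
      | inr hn2 =>
        have hcard' : n2 ≤ Fintype.card (↥(Nc : Finset V)) := by
          rwa [Fintype.card_coe]
        have := h2 ↥Nc hcard' (G.comap ((Function.Embedding.subtype _) : {x // x ∈ Nc} ↪ V))
        cases this with
        | inl h =>
          obtain ⟨A, hA⟩ := h
          exact Or.inl ⟨A.map (Function.Embedding.subtype _), isNClique_comap_map _ _ hA⟩
        | inr h =>
          obtain ⟨A, hA⟩ := h
          rw [← comap_compl_emb] at hA
          have hB := isNClique_comap_map _ _ hA
          set B := A.map (Function.Embedding.subtype _) with hBdef
          have hBN : ∀ b ∈ B, b ∈ Nc := by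
            intro b hb
            simp only [hBdef, mem_map, Function.Embedding.coe_subtype] at hb
            obtain ⟨a, _, rfl⟩ := hb
            exact a.2
          refine Or.inr ⟨insert v B, SimpleGraph.IsNClique.insert hB ?_⟩
          intro b hb
          have hbNc := hBN b hb
          rw [hNc, mem_filter, mem_erase] at hbNc
          rw [SimpleGraph.compl_adj]
          exact ⟨fun h' => hbNc.1.1 h'.symm, hbNc.2⟩

noncomputable def diagonalRamsey (k : ℕ) : ℕ :=
  sInf {n : ℕ | 0 < n ∧ ∀ G : SimpleGraph (Fin n),
    (∃ s : Finset (Fin n), G.IsNClique k s) ∨ (∃ s : Finset (Fin n), Gᶜ.IsNClique k s)}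

lemma ramseyS_mono {k r n : ℕ} (hrn : r ≤ n)
    (hr : r ∈ {n : ℕ | 0 < n ∧ ∀ G : SimpleGraph (Fin n),
      (∃ s : Finset (Fin n), G.IsNClique k s) ∨ (∃ s : Finset (Fin n), Gᶜ.IsNClique k s)}) :
    n ∈ {n : ℕ | 0 < n ∧ ∀ G : SimpleGraph (Fin n),
      (∃ s : Finset (Fin n), G.IsNClique k s) ∨ (∃ s : Finset (Fin n), Gᶜ.IsNClique k s)} := by
  obtain ⟨hr0, hr⟩ := hr
  refine ⟨by omega, fun G => ?_⟩
  set f : Fin r ↪ Fin n := ⟨Fin.castLE hrn, Fin.castLE_injective hrn⟩ with hf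
  cases hr (G.comap ⇑f) with
  | inl h =>
    obtain ⟨s, hs⟩ := h
    exact Or.inl ⟨s.map f, isNClique_comap_map _ _ hs⟩
  | inr h =>
    obtain ⟨s, hs⟩ := h
    rw [← comap_compl_emb] at hs
    exact Or.inr ⟨s.map f, isNClique_comap_map _ _ hs⟩

lemma diagonalRamsey_le_forward {k n : ℕ} (h : diagonalRamsey k ≤ n) :
    ∀ G : SimpleGraph (Fin n),
      (∃ s : Finset (Fin n), G.IsNClique k s) ∨ (∃ s : Finset (Fin n), Gᶜ.IsNClique k s) := by
  obtain ⟨n0, hn0⟩ := ramsey_aux (k + k) k k le_rfl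
  have hmem : max n0 1 ∈ {n : ℕ | 0 < n ∧ ∀ G : SimpleGraph (Fin n),
      (∃ s : Finset (Fin n), G.IsNClique k s) ∨ (∃ s : Finset (Fin n), Gᶜ.IsNClique k s)} := by
    refine ⟨by omega, fun G => ?_⟩
    exact hn0 (Fin (max n0 1)) (by simp) G
  have hne : {n : ℕ | 0 < n ∧ ∀ G : SimpleGraph (Fin n),
      (∃ s : Finset (Fin n), G.IsNClique k s) ∨
        (∃ s : Finset (Fin n), Gᶜ.IsNClique k s)}.Nonempty := ⟨_, hmem⟩
  have hinf := Nat.sInf_mem hne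
  exact (ramseyS_mono h hinf).2

lemma diagonalRamsey_not_le {k n : ℕ} (hn : 0 < n) (h : ¬ diagonalRamsey k ≤ n) :
    ∃ G : SimpleGraph (Fin n),
      ¬ (∃ s : Finset (Fin n), G.IsNClique k s) ∧ ¬ (∃ s : Finset (Fin n), Gᶜ.IsNClique k s) := by
  by_contra hcon
  push_neg at hcon
  apply h
  apply Nat.sInf_le
  refine ⟨hn, fun G => ?_⟩
  by_cases h1 : ∃ s : Finset (Fin n), G.IsNClique k s
  · exact Or.inl h1
  · exact Or.inr (hcon G (by push_neg at h1; exact h1))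

open Complex

lemma one_sub_exp (θ : ℝ) :
    1 - Complex.exp ((θ : ℂ) * I) =
      ((2 * Real.sin (θ / 2) : ℝ) : ℂ) * Complex.exp ((((θ - Real.pi) / 2 : ℝ) : ℂ) * I) := by
  rw [Complex.exp_mul_I, Complex.exp_mul_I]
  have hc : Complex.cos ((((θ - Real.pi) / 2 : ℝ) : ℂ)) = ((Real.sin (θ / 2) : ℝ) : ℂ) := by
    rw [← Complex.ofReal_cos, Complex.ofReal_inj]
    have : (θ - Real.pi) / 2 = -(Real.pi / 2 - θ / 2) := by ring
    rw [this, Real.cos_neg, Real.cos_pi_div_two_sub]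
  have hs : Complex.sin ((((θ - Real.pi) / 2 : ℝ) : ℂ)) = -((Real.cos (θ / 2) : ℝ) : ℂ) := by
    rw [← Complex.ofReal_sin]
    have : (θ - Real.pi) / 2 = -(Real.pi / 2 - θ / 2) := by ring
    rw [this, Real.sin_neg, Real.sin_pi_div_two_sub]
    push_cast
    ring
  rw [hc, hs, ← Complex.ofReal_cos, ← Complex.ofReal_sin]
  have hcos : Real.cos θ = 1 - 2 * Real.sin (θ / 2) ^ 2 := by
    have h1 : Real.cos (2 * (θ / 2)) = Real.cos (θ / 2) ^ 2 - Real.sin (θ / 2) ^ 2 :=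
      Real.cos_two_mul' _
    have h2 : Real.sin (θ / 2) ^ 2 + Real.cos (θ / 2) ^ 2 = 1 := Real.sin_sq_add_cos_sq _
    have h3 : 2 * (θ / 2) = θ := by ring
    rw [h3] at h1
    linarith
  have hsin : Real.sin θ = 2 * Real.sin (θ / 2) * Real.cos (θ / 2) := by
    have h1 : Real.sin (2 * (θ / 2)) = 2 * Real.sin (θ / 2) * Real.cos (θ / 2) :=
      Real.sin_two_mul _
    rw [← h1]; ring_nf
  rw [hcos, hsin]
  push_cast
  ring

variable {n : ℕ}

def eW (W : Finset (Finset (Fin n))) (v : Finset (Fin n)) : ℕ :=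
  (W.filter (· ⊆ v)).card

lemma filter_subset_powersetCard {W : Finset (Finset (Fin n))}
    (hW : W ⊆ Finset.powersetCard 2 (Finset.univ : Finset (Fin n)))
    (v : Finset (Fin n)) :
    W.filter (· ⊆ v) ⊆ Finset.powersetCard 2 v := by
  intro u hu
  rw [mem_filter] at hu
  exact mem_powersetCard.2 ⟨hu.2, (mem_powersetCard.1 (hW hu.1)).2⟩

lemma eW_le {k : ℕ} {W : Finset (Finset (Fin n))}
    (hW : W ⊆ Finset.powersetCard 2 (Finset.univ : Finset (Fin n)))
    {v : Finset (Fin n)} (hv : v.card = k) :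
    eW W v ≤ k.choose 2 := by
  have := Finset.card_le_card (filter_subset_powersetCard hW v)
  rwa [Finset.card_powersetCard, hv] at this

/-- the number of `k`-subsets of `univ` containing a fixed 2-set -/
lemma card_filter_superset {k : ℕ} (hk : 2 ≤ k) {u : Finset (Fin n)} (hu : u.card = 2) :
    ((Finset.powersetCard k (Finset.univ : Finset (Fin n))).filter
      (fun v => u ⊆ v)).card = (n - 2).choose (k - 2) := by
  classical
  have hmain : ((Finset.powersetCard k (Finset.univ : Finset (Fin n))).filter
      (fun v => u ⊆ v)).card =
      (Finset.powersetCard (k - 2) ((Finset.univ : Finset (Fin n)) \ u)).card := by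
    apply Finset.card_bij' (fun v _ => v \ u) (fun w _ => w ∪ u)
    · intro v hv
      rw [mem_filter, mem_powersetCard] at hv
      rw [mem_powersetCard]
      refine ⟨Finset.sdiff_subset_sdiff hv.1.1 le_rfl, ?_⟩
      rw [Finset.card_sdiff_of_subset hv.2, hv.1.2, hu]
    · intro w hw
      rw [mem_powersetCard] at hw
      have hdisj : Disjoint w u :=
        Finset.disjoint_left.2 (fun x hxw hxu => (Finset.mem_sdiff.1 (hw.1 hxw)).2 hxu)
      rw [mem_filter, mem_powersetCard]
      refine ⟨⟨Finset.subset_univ _, ?_⟩, Finset.subset_union_right⟩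
      rw [Finset.card_union_of_disjoint hdisj, hw.2, hu]
      have hun : u.card ≤ n := by
        have := Finset.card_le_card (Finset.subset_univ u)
        simpa using this
      omega
    · intro v hv
      rw [mem_filter] at hv
      exact Finset.sdiff_union_of_subset hv.2
    · intro w hw
      rw [mem_powersetCard] at hw
      have hdisj : Disjoint w u :=
        Finset.disjoint_left.2 (fun x hxw hxu => (Finset.mem_sdiff.1 (hw.1 hxw)).2 hxu)
      exact Finset.union_sdiff_cancel_right hdisj
  rw [hmain, Finset.card_powersetCard, Finset.card_sdiff_of_subset (Finset.subset_univ u), hu]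
  simp

lemma sum_eW {k : ℕ} (hk : 2 ≤ k) {W : Finset (Finset (Fin n))}
    (hW : W ⊆ Finset.powersetCard 2 (Finset.univ : Finset (Fin n))) :
    ∑ v ∈ Finset.powersetCard k (Finset.univ : Finset (Fin n)), eW W v =
      W.card * (n - 2).choose (k - 2) := by
  classical
  have : ∑ v ∈ Finset.powersetCard k (Finset.univ : Finset (Fin n)), eW W v =
      ∑ u ∈ W, ((Finset.powersetCard k (Finset.univ : Finset (Fin n))).filter
        (fun v => u ⊆ v)).card := by
    simp only [eW, card_filter]
    rw [Finset.sum_comm]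
  rw [this]
  rw [Finset.sum_congr rfl (fun u hu => card_filter_superset hk (mem_powersetCard.1 (hW hu)).2)]
  rw [Finset.sum_const, smul_eq_mul]

lemma eW_S2 (v : Finset (Fin n)) :
    eW (Finset.powersetCard 2 (Finset.univ : Finset (Fin n))) v = v.card.choose 2 := by
  rw [eW]
  have : (Finset.powersetCard 2 (Finset.univ : Finset (Fin n))).filter (· ⊆ v) =
      Finset.powersetCard 2 v := by
    ext u
    simp only [mem_filter, mem_powersetCard]
    constructor
    · rintro ⟨⟨_, hc⟩, hs⟩; exact ⟨hs, hc⟩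
    · rintro ⟨hs, hc⟩; exact ⟨⟨Finset.subset_univ _, hc⟩, hs⟩
  rw [this, Finset.card_powersetCard]

lemma eW_sdiff {W : Finset (Finset (Fin n))}
    (hW : W ⊆ Finset.powersetCard 2 (Finset.univ : Finset (Fin n))) (v : Finset (Fin n)) :
    eW ((Finset.powersetCard 2 (Finset.univ : Finset (Fin n))) \ W) v =
      v.card.choose 2 - eW W v := by
  classical
  have hfs : ((Finset.powersetCard 2 (Finset.univ : Finset (Fin n))) \ W).filter (· ⊆ v) =
      ((Finset.powersetCard 2 (Finset.univ : Finset (Fin n))).filter (· ⊆ v)) \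
        (W.filter (· ⊆ v)) := by
    ext u
    simp only [mem_filter, Finset.mem_sdiff]
    tauto
  rw [← eW_S2 v, eW, eW, eW, hfs, Finset.card_sdiff_of_subset (Finset.filter_subset_filter _ hW)]

lemma prod_form {k : ℕ} (hk : 2 ≤ k) (β : ℝ) {W : Finset (Finset (Fin n))}
    (hW : W ⊆ Finset.powersetCard 2 (Finset.univ : Finset (Fin n))) :
    ∏ v ∈ Finset.powersetCard k (Finset.univ : Finset (Fin n)),
      (1 - Complex.exp (((β * (eW W v : ℝ) : ℝ) : ℂ) * I)) =
    ((∏ v ∈ Finset.powersetCard k (Finset.univ : Finset (Fin n)),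
        (2 * Real.sin (β * (eW W v : ℝ) / 2)) : ℝ) : ℂ) *
      Complex.exp ((((β * ((W.card : ℝ) * ((n - 2).choose (k - 2) : ℝ)) -
        Real.pi * ((n.choose k : ℕ) : ℝ)) / 2 : ℝ) : ℂ) * I) := by
  classical
  rw [Finset.prod_congr rfl (fun v _ => one_sub_exp (β * (eW W v : ℝ)))]
  rw [Finset.prod_mul_distrib, ← Complex.ofReal_prod]
  congr 1
  rw [← Complex.exp_sum]
  congr 1
  have : ∑ v ∈ Finset.powersetCard k (Finset.univ : Finset (Fin n)),
      ((((β * (eW W v : ℝ) - Real.pi) / 2 : ℝ) : ℂ) * I) =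
      ((∑ v ∈ Finset.powersetCard k (Finset.univ : Finset (Fin n)),
        ((β * (eW W v : ℝ) - Real.pi) / 2) : ℝ) : ℂ) * I := by
    rw [Complex.ofReal_sum, Finset.sum_mul]
  rw [this]
  congr 2
  have hsum := sum_eW hk hW
  have hcardV : (Finset.powersetCard k (Finset.univ : Finset (Fin n))).card = n.choose k := by
    rw [Finset.card_powersetCard, Finset.card_univ, Fintype.card_fin]
  have hsumcast : (∑ v ∈ Finset.powersetCard k (Finset.univ : Finset (Fin n)),
      ((eW W v : ℕ) : ℝ)) = (W.card : ℝ) * (((n - 2).choose (k - 2) : ℕ) : ℝ) := by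
    rw [← Nat.cast_sum, hsum]
    push_cast
    ring
  rw [← Finset.sum_div]
  congr 1
  rw [Finset.sum_sub_distrib, ← Finset.mul_sum, hsumcast, Finset.sum_const, nsmul_eq_mul, hcardV]
  ring

lemma exists_badW {k : ℕ} (hk : 2 ≤ k) (G : SimpleGraph (Fin n))
    (h1 : ¬ ∃ s : Finset (Fin n), G.IsNClique k s)
    (h2 : ¬ ∃ s : Finset (Fin n), Gᶜ.IsNClique k s) :
    ∃ W ⊆ Finset.powersetCard 2 (Finset.univ : Finset (Fin n)),
      ∀ v ∈ Finset.powersetCard k (Finset.univ : Finset (Fin n)),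
        0 < eW W v ∧ eW W v < k.choose 2 := by
  classical
  set W0 := (Finset.powersetCard 2 (Finset.univ : Finset (Fin n))).filter
    (fun u => ∃ x ∈ u, ∃ y ∈ u, G.Adj x y) with hW0
  refine ⟨W0, Finset.filter_subset _ _, fun v hv => ?_⟩
  have hvcard : v.card = k := (mem_powersetCard.1 hv).2
  constructor
  · -- lower bound : v is not a coclique
    have hnc : ¬ Gᶜ.IsClique (v : Set (Fin n)) := by
      intro hcl
      exact h2 ⟨v, hcl, hvcard⟩
    rw [SimpleGraph.isClique_iff, Set.Pairwise] at hnc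
    push_neg at hnc
    obtain ⟨x, hx, y, hy, hxy, hnadj⟩ := hnc
    have hadj : G.Adj x y := by
      by_contra hga
      exact hnadj ⟨hxy, hga⟩
    rw [eW, Finset.card_pos]
    refine ⟨{x, y}, ?_⟩
    rw [mem_filter, hW0, mem_filter]
    refine ⟨⟨mem_powersetCard.2 ⟨Finset.subset_univ _, Finset.card_pair hxy⟩,
      ⟨x, by simp, y, by simp, hadj⟩⟩, ?_⟩
    exact Finset.insert_subset (mem_coe.1 hx) (Finset.singleton_subset_iff.2 (mem_coe.1 hy))
  · -- upper bound : v is not a clique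
    have hnc : ¬ G.IsClique (v : Set (Fin n)) := by
      intro hcl
      exact h1 ⟨v, hcl, hvcard⟩
    rw [SimpleGraph.isClique_iff, Set.Pairwise] at hnc
    push_neg at hnc
    obtain ⟨x, hx, y, hy, hxy, hnadj⟩ := hnc
    have hss : W0.filter (· ⊆ v) ⊂ Finset.powersetCard 2 v := by
      refine Finset.ssubset_iff_of_subset
        (filter_subset_powersetCard (Finset.filter_subset _ _) v) |>.2 ?_
      refine ⟨{x, y}, mem_powersetCard.2
        ⟨Finset.insert_subset (mem_coe.1 hx) (Finset.singleton_subset_iff.2 (mem_coe.1 hy)),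
          Finset.card_pair hxy⟩, ?_⟩
      intro hmem
      simp only [mem_filter] at hmem
      obtain ⟨⟨_, a, ha, b, hb, hadj⟩, _⟩ := hmem
      simp only [Finset.mem_insert, Finset.mem_singleton] at ha hb
      rcases ha with rfl | rfl <;> rcases hb with rfl | rfl
      · exact G.loopless.irrefl _ hadj
      · exact hnadj hadj
      · exact hnadj hadj.symm
      · exact G.loopless.irrefl _ hadj
    have := Finset.card_lt_card hss
    rwa [Finset.card_powersetCard, hvcard] at this

lemma conj_P {k : ℕ} {β : ℝ} (hβN : β * ((k.choose 2 : ℕ) : ℝ) = 2 * Real.pi)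
    {W : Finset (Finset (Fin n))}
    (hW : W ⊆ Finset.powersetCard 2 (Finset.univ : Finset (Fin n))) :
    (starRingEnd ℂ) (∏ v ∈ Finset.powersetCard k (Finset.univ : Finset (Fin n)),
      (1 - Complex.exp (((β * (eW W v : ℝ) : ℝ) : ℂ) * I))) =
    ∏ v ∈ Finset.powersetCard k (Finset.univ : Finset (Fin n)),
      (1 - Complex.exp (((β * (eW ((Finset.powersetCard 2
        (Finset.univ : Finset (Fin n))) \ W) v : ℝ) : ℝ) : ℂ) * I)) := by
  rw [map_prod]
  apply Finset.prod_congr rfl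
  intro v hv
  have hvk : v.card = k := (mem_powersetCard.1 hv).2
  have he : eW W v ≤ k.choose 2 := eW_le hW hvk
  have h1 : eW ((Finset.powersetCard 2 (Finset.univ : Finset (Fin n))) \ W) v =
      k.choose 2 - eW W v := by rw [eW_sdiff hW, hvk]
  have hr : β * ((eW ((Finset.powersetCard 2 (Finset.univ : Finset (Fin n))) \ W) v : ℕ) : ℝ) =
      2 * Real.pi - β * ((eW W v : ℕ) : ℝ) := by
    rw [h1, Nat.cast_sub he, mul_sub, hβN]
  rw [map_sub, map_one, ← Complex.exp_conj, map_mul, Complex.conj_ofReal, Complex.conj_I, hr]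
  congr 1
  have harg : ((2 * Real.pi - β * ((eW W v : ℕ) : ℝ) : ℝ) : ℂ) * I =
      2 * (Real.pi : ℂ) * I + ((β * ((eW W v : ℕ) : ℝ) : ℝ) : ℂ) * (-I) := by
    push_cast
    ring
  rw [harg, Complex.exp_add, Complex.exp_two_pi_mul_I, one_mul]

/-- the graph with edge set `W` -/
def graphOf (W : Finset (Finset (Fin n))) : SimpleGraph (Fin n) where
  Adj x y := x ≠ y ∧ ({x, y} : Finset (Fin n)) ∈ W
  symm := by
    constructor
    intro x y ⟨h1, h2⟩
    refine ⟨h1.symm, ?_⟩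
    rwa [Finset.pair_comm]
  loopless := by constructor; intro x ⟨h1, _⟩; exact h1 rfl

lemma eW_of_clique {k : ℕ} {W : Finset (Finset (Fin n))}
    (hW : W ⊆ Finset.powersetCard 2 (Finset.univ : Finset (Fin n)))
    {s : Finset (Fin n)} (hs : (graphOf W).IsNClique k s) :
    eW W s = k.choose 2 := by
  classical
  have hfilter : W.filter (· ⊆ s) = Finset.powersetCard 2 s := by
    ext u
    simp only [mem_filter, mem_powersetCard]
    constructor
    · rintro ⟨huW, hsub⟩
      exact ⟨hsub, (mem_powersetCard.1 (hW huW)).2⟩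
    · rintro ⟨hsub, hcard⟩
      obtain ⟨x, y, hxy, rfl⟩ := Finset.card_eq_two.1 hcard
      have hx : x ∈ s := hsub (by simp)
      have hy : y ∈ s := hsub (by simp)
      exact ⟨(hs.1 hx hy hxy).2, hsub⟩
  rw [eW, hfilter, Finset.card_powersetCard, hs.2]

lemma eW_of_coclique {k : ℕ} {W : Finset (Finset (Fin n))}
    (hW : W ⊆ Finset.powersetCard 2 (Finset.univ : Finset (Fin n)))
    {s : Finset (Fin n)} (hs : (graphOf W)ᶜ.IsNClique k s) :
    eW W s = 0 := by
  classical
  rw [eW, Finset.card_eq_zero, Finset.filter_eq_empty_iff]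
  intro u huW hsub
  obtain ⟨x, y, hxy, rfl⟩ := Finset.card_eq_two.1 (mem_powersetCard.1 (hW huW)).2
  have hx : x ∈ s := hsub (by simp)
  have hy : y ∈ s := hsub (by simp)
  have := (hs.1 hx hy hxy).2
  exact this ⟨hxy, huW⟩

lemma prod_eq_zero_of_ramsey {k : ℕ} (hk : 2 ≤ k) (hkn : k ≤ n) (m : ℤ) {β : ℝ}
    (hβ : β = 4 * Real.pi * (m : ℝ) / ((k : ℝ) * ((k : ℝ) - 1)))
    {W : Finset (Finset (Fin n))}
    (hW : W ⊆ Finset.powersetCard 2 (Finset.univ : Finset (Fin n)))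
    (hRam : (∃ s : Finset (Fin n), (graphOf W).IsNClique k s) ∨
      (∃ s : Finset (Fin n), (graphOf W)ᶜ.IsNClique k s)) :
    (∏ v ∈ Finset.powersetCard k (Finset.univ : Finset (Fin n)),
      (1 - Complex.exp (((β * (eW W v : ℝ) : ℝ) : ℂ) * I))) = 0 := by
  classical
  have hk1 : (1 : ℝ) ≤ (k : ℝ) - 1 := by
    have : (2 : ℝ) ≤ (k : ℝ) := by exact_mod_cast hk
    linarith
  have hkk : (k : ℝ) * ((k : ℝ) - 1) ≠ 0 := by positivity
  cases hRam with
  | inl h =>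
    obtain ⟨s, hs⟩ := h
    have hsV : s ∈ Finset.powersetCard k (Finset.univ : Finset (Fin n)) :=
      mem_powersetCard.2 ⟨subset_univ _, hs.2⟩
    apply Finset.prod_eq_zero hsV
    rw [eW_of_clique hW hs]
    have harg : β * ((k.choose 2 : ℕ) : ℝ) = 2 * Real.pi * (m : ℝ) := by
      rw [hβ, Nat.cast_choose_two]
      field_simp
      ring
    rw [harg]
    have : ((2 * Real.pi * (m : ℝ) : ℝ) : ℂ) * I = (m : ℂ) * (2 * Real.pi * I) := by
      push_cast; ring
    rw [this, Complex.exp_int_mul_two_pi_mul_I, sub_self]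
  | inr h =>
    obtain ⟨s, hs⟩ := h
    have hsV : s ∈ Finset.powersetCard k (Finset.univ : Finset (Fin n)) :=
      mem_powersetCard.2 ⟨subset_univ _, hs.2⟩
    apply Finset.prod_eq_zero hsV
    rw [eW_of_coclique hW hs]
    simp

lemma inc_eq_sum (W U : Finset (Finset (Fin n))) :
    ((W ×ˢ U).filter fun p => p.1 ⊆ p.2).card = ∑ v ∈ U, eW W v := by
  classical
  rw [card_filter, Finset.sum_product]
  rw [Finset.sum_comm]
  congr 1
  ext v
  rw [eW, card_filter]

lemma innerSum (k : ℕ) (A β : ℝ) (W : Finset (Finset (Fin n))) :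
    (∑ U ∈ (Finset.powersetCard k (Finset.univ : Finset (Fin n))).powerset,
      (-1 : ℝ) ^ U.card *
        Real.cos (A + β * (((W ×ˢ U).filter fun p => p.1 ⊆ p.2).card : ℝ))) =
    (Complex.exp (A * I) *
      ∏ v ∈ Finset.powersetCard k (Finset.univ : Finset (Fin n)),
        (1 - Complex.exp (((β * (eW W v : ℝ) : ℝ) : ℂ) * I))).re := by
  classical
  set V := Finset.powersetCard k (Finset.univ : Finset (Fin n)) with hV
  have key : (∑ U ∈ V.powerset,
      ((-1 : ℂ)) ^ U.card * Complex.exp ((↑(A + β * (((W ×ˢ U).filter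
        fun p => p.1 ⊆ p.2).card : ℝ)) : ℂ) * I)) =
      Complex.exp (A * I) * ∏ v ∈ V, (1 - Complex.exp (((β * (eW W v : ℝ) : ℝ) : ℂ) * I)) := by
    have step1 : ∀ U ∈ V.powerset,
        ((-1 : ℂ)) ^ U.card * Complex.exp ((↑(A + β * (((W ×ˢ U).filter
          fun p => p.1 ⊆ p.2).card : ℝ)) : ℂ) * I) =
        Complex.exp (A * I) * ∏ v ∈ U, (-Complex.exp (((β * (eW W v : ℝ) : ℝ) : ℂ) * I)) := by
      intro U _
      rw [inc_eq_sum]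
      have : ((↑(A + β * ((∑ v ∈ U, eW W v : ℕ) : ℝ)) : ℂ) * I) =
          (A * I) + ∑ v ∈ U, ((((β * (eW W v : ℝ) : ℝ)) : ℂ) * I) := by
        push_cast
        rw [← Finset.sum_mul, ← Finset.mul_sum]
        ring
      rw [this, Complex.exp_add, Complex.exp_sum]
      have hprod : ∏ v ∈ U, (-Complex.exp (((β * (eW W v : ℝ) : ℝ) : ℂ) * I)) =
          (-1 : ℂ) ^ U.card * ∏ v ∈ U, Complex.exp (((β * (eW W v : ℝ) : ℝ) : ℂ) * I) := by
        rw [← Finset.prod_const, ← Finset.prod_mul_distrib]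
        exact Finset.prod_congr rfl (fun v _ => (neg_one_mul _).symm)
      rw [hprod]
      ring
    rw [Finset.sum_congr rfl step1, ← Finset.mul_sum]
    congr 1
    have := Finset.prod_add (fun v => -Complex.exp (((β * (eW W v : ℝ) : ℝ) : ℂ) * I))
      (fun _ => (1 : ℂ)) V
    simp only [Finset.prod_const_one, mul_one] at this
    rw [← this]
    apply Finset.prod_congr rfl
    intro v _
    ring
  rw [← key, Complex.re_sum]
  apply Finset.sum_congr rfl
  intro U _
  have h1 : ((-1 : ℂ)) ^ U.card = ((((-1 : ℝ)) ^ U.card : ℝ) : ℂ) := by push_cast; ring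
  rw [h1, Complex.re_ofReal_mul, Complex.exp_ofReal_mul_I_re]

set_option maxHeartbeats 2000000 in
theorem backward {k : ℕ} (hk : 2 ≤ k) (hkn : k ≤ n)
    (hsum : ∀ (q : ℝ) (m : ℤ),
        (∑ W ∈ (Finset.powersetCard 2 (Finset.univ : Finset (Fin n))).powerset,
          ∑ U ∈ (Finset.powersetCard k (Finset.univ : Finset (Fin n))).powerset,
            (-1 : ℝ) ^ U.card *
              Real.cos
                (Real.pi * q * ((n - 2).factorial : ℝ) /
                    ((k.factorial : ℝ) * ((n - k).factorial : ℝ)) *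
                  (4 * (W.card : ℝ) - (n : ℝ) * ((n : ℝ) - 1)) +
                4 * Real.pi * (m : ℝ) / ((k : ℝ) * ((k : ℝ) - 1)) *
                  (((W ×ˢ U).filter fun p => p.1 ⊆ p.2).card : ℝ))) = 0) :
    diagonalRamsey k ≤ n := by
  classical
  by_contra hneg
  have hn0 : 0 < n := by omega
  obtain ⟨G, hG1, hG2⟩ := diagonalRamsey_not_le hn0 hneg
  obtain ⟨W0, hW0S2, hW0e⟩ := exists_badW hk G hG1 hG2
  -- basic numeric facts
  have hkR : (2 : ℝ) ≤ (k : ℝ) := by exact_mod_cast hk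
  have hkk : (0 : ℝ) < (k : ℝ) * ((k : ℝ) - 1) := by nlinarith
  set β : ℝ := 4 * Real.pi * ((1 : ℤ) : ℝ) / ((k : ℝ) * ((k : ℝ) - 1)) with hβ
  have hβpos : 0 < β := by
    rw [hβ]
    have := Real.pi_pos
    simp only [Int.cast_one]
    positivity
  have hβN : β * ((k.choose 2 : ℕ) : ℝ) = 2 * Real.pi := by
    rw [hβ, Nat.cast_choose_two]
    simp only [Int.cast_one]
    have hkk' : (k : ℝ) - 1 ≠ 0 := by linarith
    field_simp
    ring
  set P : Finset (Finset (Fin n)) → ℂ := fun W =>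
    ∏ v ∈ Finset.powersetCard k (Finset.univ : Finset (Fin n)),
      (1 - Complex.exp (((β * (eW W v : ℝ) : ℝ) : ℂ) * I)) with hP
  -- Step 1 : the real part of F vanishes
  have hre : ∀ q : ℝ,
      (∑ W ∈ (Finset.powersetCard 2 (Finset.univ : Finset (Fin n))).powerset,
        Complex.exp (((Real.pi * q * ((n - 2).factorial : ℝ) /
            ((k.factorial : ℝ) * ((n - k).factorial : ℝ)) *
          (4 * (W.card : ℝ) - (n : ℝ) * ((n : ℝ) - 1)) : ℝ) : ℂ) * I) * P W).re = 0 := by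
    intro q
    have h := hsum q 1
    rw [Finset.sum_congr rfl (fun W _ => innerSum k
      (Real.pi * q * ((n - 2).factorial : ℝ) /
            ((k.factorial : ℝ) * ((n - k).factorial : ℝ)) *
          (4 * (W.card : ℝ) - (n : ℝ) * ((n : ℝ) - 1)))
      (4 * Real.pi * ((1 : ℤ) : ℝ) / ((k : ℝ) * ((k : ℝ) - 1))) W)] at h
    rw [← Complex.re_sum] at h
    exact h
  -- Step 2 : F itself vanishes (it is real by complement symmetry)
  have hM2 : (((Finset.powersetCard 2 (Finset.univ : Finset (Fin n))).card : ℕ) : ℝ) * 2 =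
      (n : ℝ) * ((n : ℝ) - 1) := by
    rw [Finset.card_powersetCard, Finset.card_univ, Fintype.card_fin, Nat.cast_choose_two]
    ring
  have hF0 : ∀ q : ℝ,
      (∑ W ∈ (Finset.powersetCard 2 (Finset.univ : Finset (Fin n))).powerset,
        Complex.exp (((Real.pi * q * ((n - 2).factorial : ℝ) /
            ((k.factorial : ℝ) * ((n - k).factorial : ℝ)) *
          (4 * (W.card : ℝ) - (n : ℝ) * ((n : ℝ) - 1)) : ℝ) : ℂ) * I) * P W) = 0 := by
    intro q
    have hconj : (starRingEnd ℂ)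
        (∑ W ∈ (Finset.powersetCard 2 (Finset.univ : Finset (Fin n))).powerset,
          Complex.exp (((Real.pi * q * ((n - 2).factorial : ℝ) /
              ((k.factorial : ℝ) * ((n - k).factorial : ℝ)) *
            (4 * (W.card : ℝ) - (n : ℝ) * ((n : ℝ) - 1)) : ℝ) : ℂ) * I) * P W) =
        (∑ W ∈ (Finset.powersetCard 2 (Finset.univ : Finset (Fin n))).powerset,
          Complex.exp (((Real.pi * q * ((n - 2).factorial : ℝ) /
              ((k.factorial : ℝ) * ((n - k).factorial : ℝ)) *
            (4 * (W.card : ℝ) - (n : ℝ) * ((n : ℝ) - 1)) : ℝ) : ℂ) * I) * P W) := by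
      rw [map_sum]
      have hterm : ∀ W ∈ (Finset.powersetCard 2 (Finset.univ : Finset (Fin n))).powerset,
          (starRingEnd ℂ)
            (Complex.exp (((Real.pi * q * ((n - 2).factorial : ℝ) /
                ((k.factorial : ℝ) * ((n - k).factorial : ℝ)) *
              (4 * (W.card : ℝ) - (n : ℝ) * ((n : ℝ) - 1)) : ℝ) : ℂ) * I) * P W) =
          Complex.exp (((Real.pi * q * ((n - 2).factorial : ℝ) /
              ((k.factorial : ℝ) * ((n - k).factorial : ℝ)) *
            (4 * (((Finset.powersetCard 2 (Finset.univ : Finset (Fin n))) \ W).card : ℝ) -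
              (n : ℝ) * ((n : ℝ) - 1)) : ℝ) : ℂ) * I) *
            P ((Finset.powersetCard 2 (Finset.univ : Finset (Fin n))) \ W) := by
        intro W hW
        have hWs : W ⊆ Finset.powersetCard 2 (Finset.univ : Finset (Fin n)) :=
          Finset.mem_powerset.1 hW
        rw [map_mul, ← Complex.exp_conj, map_mul, Complex.conj_ofReal, Complex.conj_I]
        rw [hP] at *
        rw [conj_P hβN hWs]
        congr 1
        have hcard : (((Finset.powersetCard 2 (Finset.univ : Finset (Fin n))) \ W).card : ℝ) =
            (((Finset.powersetCard 2 (Finset.univ : Finset (Fin n))).card : ℕ) : ℝ) -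
              (W.card : ℝ) := by
          rw [Finset.card_sdiff_of_subset hWs, Nat.cast_sub (Finset.card_le_card hWs)]
        rw [hcard]
        have harg : ((Real.pi * q * ((n - 2).factorial : ℝ) /
              ((k.factorial : ℝ) * ((n - k).factorial : ℝ)) *
            (4 * ((((Finset.powersetCard 2 (Finset.univ : Finset (Fin n))).card : ℕ) : ℝ) -
              (W.card : ℝ)) - (n : ℝ) * ((n : ℝ) - 1)) : ℝ) : ℂ) =
            -((Real.pi * q * ((n - 2).factorial : ℝ) /
              ((k.factorial : ℝ) * ((n - k).factorial : ℝ)) *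
            (4 * ((W.card : ℕ) : ℝ) - (n : ℝ) * ((n : ℝ) - 1)) : ℝ) : ℂ) := by
          rw [← Complex.ofReal_neg, Complex.ofReal_inj]
          have : 4 * ((((Finset.powersetCard 2 (Finset.univ : Finset (Fin n))).card : ℕ) : ℝ) -
              (W.card : ℝ)) - (n : ℝ) * ((n : ℝ) - 1) =
              -((4 * ((W.card : ℕ) : ℝ) - (n : ℝ) * ((n : ℝ) - 1))) := by
            nlinarith [hM2]
          rw [this]
          ring
        rw [harg]
        congr 1
        push_cast
        ring
      rw [Finset.sum_congr rfl hterm]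
      apply Finset.sum_nbij'
        (fun W => (Finset.powersetCard 2 (Finset.univ : Finset (Fin n))) \ W)
        (fun W => (Finset.powersetCard 2 (Finset.univ : Finset (Fin n))) \ W)
      · intro a ha
        exact Finset.mem_powerset.2 (Finset.sdiff_subset)
      · intro a ha
        exact Finset.mem_powerset.2 (Finset.sdiff_subset)
      · intro a ha
        rw [Finset.sdiff_sdiff_self_left, Finset.inter_eq_right.2 (Finset.mem_powerset.1 ha)]
      · intro a ha
        rw [Finset.sdiff_sdiff_self_left, Finset.inter_eq_right.2 (Finset.mem_powerset.1 ha)]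
      · intro a ha
        rfl
    have him := Complex.conj_eq_iff_im.1 hconj
    have hreq := hre q
    apply Complex.ext
    · simpa using hreq
    · simpa using him
  -- Step 3 : grouping by number of edges, polynomial argument
  set M := (Finset.powersetCard 2 (Finset.univ : Finset (Fin n))).card with hMdef
  set c : ℕ → ℂ := fun j =>
    ∑ W ∈ Finset.powersetCard j (Finset.powersetCard 2 (Finset.univ : Finset (Fin n))), P W
    with hc
  have hgroup : ∀ q : ℝ,
      (∑ j ∈ Finset.range (M + 1),
        Complex.exp (((Real.pi * q * ((n - 2).factorial : ℝ) /
            ((k.factorial : ℝ) * ((n - k).factorial : ℝ)) *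
          (4 * (j : ℝ) - (n : ℝ) * ((n : ℝ) - 1)) : ℝ) : ℂ) * I) * c j) = 0 := by
    intro q
    have h := hF0 q
    rw [← Finset.sum_fiberwise_of_maps_to (g := Finset.card)
      (t := Finset.range (M + 1))
      (fun W hW => Finset.mem_range.2 (Nat.lt_succ_of_le
        (Finset.card_le_card (Finset.mem_powerset.1 hW))))] at h
    rw [← h]
    apply Finset.sum_congr rfl
    intro j _
    have hfil : Finset.filter (fun W => W.card = j)
        (Finset.powersetCard 2 (Finset.univ : Finset (Fin n))).powerset =
        Finset.powersetCard j (Finset.powersetCard 2 (Finset.univ : Finset (Fin n))) :=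
      Finset.powersetCard_eq_filter.symm
    rw [hfil, hc, Finset.mul_sum]
    apply Finset.sum_congr rfl
    intro W hW
    have hWc : W.card = j := (mem_powersetCard.1 hW).2
    rw [hWc]
  set p : Polynomial ℂ :=
    ∑ j ∈ Finset.range (M + 1), Polynomial.C (c j) * Polynomial.X ^ j with hpdef
  have heval : ∀ θ : ℝ, p.eval (Complex.exp ((θ : ℂ) * I)) = 0 := by
    intro θ
    have hfac : (0 : ℝ) < ((k.factorial : ℝ) * ((n - k).factorial : ℝ)) := by
      positivity
    have hfac2 : (0 : ℝ) < ((n - 2).factorial : ℝ) := by positivity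
    set q : ℝ := (θ / 4) * ((k.factorial : ℝ) * ((n - k).factorial : ℝ)) /
      (Real.pi * ((n - 2).factorial : ℝ)) with hq
    have haq : Real.pi * q * ((n - 2).factorial : ℝ) /
        ((k.factorial : ℝ) * ((n - k).factorial : ℝ)) = θ / 4 := by
      rw [hq]
      have hpi := Real.pi_pos
      field_simp
    have h := hgroup q
    have hterm : ∀ j ∈ Finset.range (M + 1),
        Complex.exp (((Real.pi * q * ((n - 2).factorial : ℝ) /
            ((k.factorial : ℝ) * ((n - k).factorial : ℝ)) *
          (4 * (j : ℝ) - (n : ℝ) * ((n : ℝ) - 1)) : ℝ) : ℂ) * I) * c j =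
        (c j * (Complex.exp ((θ : ℂ) * I)) ^ j) *
          Complex.exp (((-(θ / 4) * ((n : ℝ) * ((n : ℝ) - 1)) : ℝ) : ℂ) * I) := by
      intro j _
      rw [haq]
      have harg : ((θ / 4 * (4 * (j : ℝ) - (n : ℝ) * ((n : ℝ) - 1)) : ℝ) : ℂ) * I =
          (j : ℂ) * ((θ : ℂ) * I) + ((-(θ / 4) * ((n : ℝ) * ((n : ℝ) - 1)) : ℝ) : ℂ) * I := by
        push_cast
        ring
      rw [harg, Complex.exp_add, Complex.exp_nat_mul]
      ring
    rw [Finset.sum_congr rfl hterm, ← Finset.sum_mul] at h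
    rcases mul_eq_zero.1 h with h0 | h0
    · rw [hpdef]
      rw [Polynomial.eval_finset_sum]
      simp only [Polynomial.eval_mul, Polynomial.eval_C, Polynomial.eval_pow, Polynomial.eval_X]
      exact h0
    · exact absurd h0 (Complex.exp_ne_zero _)
  have hp0 : p = 0 := by
    apply Polynomial.eq_zero_of_infinite_isRoot
    have hinj : Set.InjOn (fun θ : ℝ => Complex.exp ((θ : ℂ) * I)) (Set.Ioo 0 1) := by
      intro θ1 h1 θ2 h2 heq
      rw [Complex.exp_eq_exp_iff_exists_int] at heq
      obtain ⟨m, hm⟩ := heq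
      have him := congrArg Complex.im hm
      simp only [Complex.mul_im, Complex.ofReal_re, Complex.I_im, Complex.ofReal_im,
        Complex.I_re, Complex.add_im, Complex.intCast_im, Complex.intCast_re,
        Complex.mul_re, Complex.re_ofNat, Complex.im_ofNat] at him
      have hθ : θ1 = θ2 + (m : ℝ) * (2 * Real.pi) := by
        push_cast at him ⊢
        linarith [him]
      have hpi := Real.pi_gt_three
      have hm0 : m = 0 := by
        rcases lt_trichotomy m 0 with hlt | rfl | hgt
        · have hm1 : m ≤ -1 := by omega
          have : (m : ℝ) ≤ -1 := by exact_mod_cast hm1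
          simp only [Set.mem_Ioo] at h1 h2
          nlinarith
        · rfl
        · have : (1 : ℝ) ≤ (m : ℝ) := by exact_mod_cast hgt
          simp only [Set.mem_Ioo] at h1 h2
          nlinarith
      rw [hm0] at hθ
      simpa using hθ
    have himg := (Set.Ioo_infinite (by norm_num : (0:ℝ) < 1)).image hinj
    apply himg.mono
    rintro x ⟨θ, _, rfl⟩
    exact heval θ
  have hj0M : W0.card < M + 1 := Nat.lt_succ_of_le (Finset.card_le_card hW0S2)
  have hcj0 : c W0.card = 0 := by
    have hco : p.coeff W0.card = 0 := by rw [hp0]; simp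
    rw [hpdef, Polynomial.finset_sum_coeff] at hco
    simp only [Polynomial.coeff_C_mul, Polynomial.coeff_X_pow] at hco
    rwa [Finset.sum_eq_single W0.card
      (fun j _ hj => by simp [Ne.symm hj])
      (fun hnot => absurd (Finset.mem_range.2 hj0M) hnot), if_pos rfl, mul_one] at hco
  -- Step 4 : contradiction via positivity
  set r : Finset (Finset (Fin n)) → ℝ := fun W =>
    ∏ v ∈ Finset.powersetCard k (Finset.univ : Finset (Fin n)),
      (2 * Real.sin (β * (eW W v : ℝ) / 2)) with hr
  set φ : ℝ := (β * ((W0.card : ℝ) * ((n - 2).choose (k - 2) : ℝ)) -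
      Real.pi * ((n.choose k : ℕ) : ℝ)) / 2 with hφ
  have hPform : ∀ W ∈ Finset.powersetCard W0.card
      (Finset.powersetCard 2 (Finset.univ : Finset (Fin n))),
      P W = ((r W : ℝ) : ℂ) * Complex.exp ((φ : ℂ) * I) := by
    intro W hW
    obtain ⟨hWs, hWc⟩ := mem_powersetCard.1 hW
    simp only [hP, hr, hφ]
    rw [prod_form hk β hWs, hWc]
  have hsum0 : (∑ W ∈ Finset.powersetCard W0.card
      (Finset.powersetCard 2 (Finset.univ : Finset (Fin n))), r W) = 0 := by
    have : c W0.card = ((∑ W ∈ Finset.powersetCard W0.card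
        (Finset.powersetCard 2 (Finset.univ : Finset (Fin n))), r W : ℝ) : ℂ) *
        Complex.exp ((φ : ℂ) * I) := by
      have hcc : c W0.card = ∑ W ∈ Finset.powersetCard W0.card
          (Finset.powersetCard 2 (Finset.univ : Finset (Fin n))), P W := rfl
      rw [hcc, Finset.sum_congr rfl hPform, ← Finset.sum_mul, ← Complex.ofReal_sum]
    rw [hcj0] at this
    have := (mul_eq_zero.1 this.symm).resolve_right (Complex.exp_ne_zero _)
    exact_mod_cast this
  have hβe_le : ∀ {W : Finset (Finset (Fin n))},
      W ⊆ Finset.powersetCard 2 (Finset.univ : Finset (Fin n)) →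
      ∀ v ∈ Finset.powersetCard k (Finset.univ : Finset (Fin n)),
        β * (eW W v : ℝ) / 2 ≤ Real.pi := by
    intro W hWs v hv
    have he : (eW W v : ℝ) ≤ ((k.choose 2 : ℕ) : ℝ) := by
      exact_mod_cast eW_le hWs (mem_powersetCard.1 hv).2
    nlinarith [hβN, hβpos]
  have hrnonneg : ∀ W ∈ Finset.powersetCard W0.card
      (Finset.powersetCard 2 (Finset.univ : Finset (Fin n))), 0 ≤ r W := by
    intro W hW
    obtain ⟨hWs, _⟩ := mem_powersetCard.1 hW
    rw [hr]
    apply Finset.prod_nonneg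
    intro v hv
    have h1 : 0 ≤ β * (eW W v : ℝ) / 2 := by positivity
    have h2 := hβe_le hWs v hv
    have := Real.sin_nonneg_of_nonneg_of_le_pi h1 h2
    linarith
  have hW0mem : W0 ∈ Finset.powersetCard W0.card
      (Finset.powersetCard 2 (Finset.univ : Finset (Fin n))) :=
    mem_powersetCard.2 ⟨hW0S2, rfl⟩
  have hrpos : 0 < r W0 := by
    rw [hr]
    apply Finset.prod_pos
    intro v hv
    obtain ⟨helo, hehi⟩ := hW0e v hv
    have h1 : 0 < β * (eW W0 v : ℝ) / 2 := by
      have : (0 : ℝ) < (eW W0 v : ℝ) := by exact_mod_cast helo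
      positivity
    have h2 : β * (eW W0 v : ℝ) / 2 < Real.pi := by
      have he : (eW W0 v : ℝ) < ((k.choose 2 : ℕ) : ℝ) := by exact_mod_cast hehi
      nlinarith [hβN, hβpos]
    have := Real.sin_pos_of_pos_of_lt_pi h1 h2
    linarith
  have : (0 : ℝ) < ∑ W ∈ Finset.powersetCard W0.card
      (Finset.powersetCard 2 (Finset.univ : Finset (Fin n))), r W :=
    Finset.sum_pos' hrnonneg ⟨W0, hW0mem, hrpos⟩
  rw [hsum0] at this
  exact lt_irrefl 0 this

/-- A simple graph on `[n]` is identified with its edge set `W ⊆ C([n],2)`, and a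
`k`-uniform hypergraph on `[n]` with its edge set `U ⊆ C([n],k)`.  The incidence number
`i(G,H)` is the number of pairs `(u,v) ∈ E(G) × E(H)` with `u ⊆ v`. -/
theorem stmt_3 (n k : ℕ) (hk : 2 ≤ k) (hkn : k ≤ n) :
    diagonalRamsey k ≤ n ↔
      ∀ (q : ℝ) (m : ℤ),
        (∑ W ∈ (Finset.powersetCard 2 (Finset.univ : Finset (Fin n))).powerset,
          ∑ U ∈ (Finset.powersetCard k (Finset.univ : Finset (Fin n))).powerset,
            (-1 : ℝ) ^ U.card *
              Real.cos
                (Real.pi * q * ((n - 2).factorial : ℝ) /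
                    ((k.factorial : ℝ) * ((n - k).factorial : ℝ)) *
                  (4 * (W.card : ℝ) - (n : ℝ) * ((n : ℝ) - 1)) +
                4 * Real.pi * (m : ℝ) / ((k : ℝ) * ((k : ℝ) - 1)) *
                  (((W ×ˢ U).filter fun p => p.1 ⊆ p.2).card : ℝ))) = 0 := by
  constructor
  · intro h q m
    apply Finset.sum_eq_zero
    intro W hW
    rw [innerSum k
      (Real.pi * q * ((n - 2).factorial : ℝ) /
          ((k.factorial : ℝ) * ((n - k).factorial : ℝ)) *
        (4 * (W.card : ℝ) - (n : ℝ) * ((n : ℝ) - 1)))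
      (4 * Real.pi * (m : ℝ) / ((k : ℝ) * ((k : ℝ) - 1))) W]
    rw [prod_eq_zero_of_ramsey hk hkn m rfl (Finset.mem_powerset.1 hW)
      (diagonalRamsey_le_forward h (graphOf W)), mul_zero, Complex.zero_re]
  · exact backward hk hkn
end

section
/- Let n ≥ k ≥ 2 be positive integers. Then n ≥ R(k) holds if and only if Σ_{U ⊆ C([n],k)} ∏_{e ∈ C([n],2)} cos( −π(n−2)!/(k!(n−k)!) + (2π/(k(k−1))) · mult(e,U) ) = 0, where the sum is over all subsets U of the set of k-element subsets of [n] and the product is over all 2-element subsets e of [n]. -/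
open Finset Real

lemma isNClique_comap {V W : Type*} {f : V ↪ W} {G : SimpleGraph W} {m : ℕ}
    {B : Finset V} (h : (G.comap f).IsNClique m B) : G.IsNClique m (B.map f) := by
  constructor
  · intro x hx y hy hne
    rw [Finset.coe_map] at hx hy
    obtain ⟨a, ha, rfl⟩ := hx
    obtain ⟨b, hb, rfl⟩ := hy
    exact h.1 ha hb (fun e => hne (by rw [e]))
  · rw [Finset.card_map]; exact h.2

lemma compl_comap {V W : Type*} {f : V ↪ W} {G : SimpleGraph W} :
    (G.comap f)ᶜ = Gᶜ.comap f := by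
  ext a b
  simp only [SimpleGraph.compl_adj, SimpleGraph.comap_adj, f.injective.ne_iff]

def RamseyProp (N s t : ℕ) : Prop :=
  ∀ (V : Type) (_ : Fintype V) (_ : DecidableEq V), N ≤ Fintype.card V →
    ∀ G : SimpleGraph V,
      (∃ A : Finset V, G.IsNClique s A) ∨ (∃ A : Finset V, Gᶜ.IsNClique t A)

lemma ramseyProp_exists : ∀ s t : ℕ, ∃ N, RamseyProp N s t := by
  intro s
  induction s with
  | zero => exact fun t => ⟨0, fun V _ _ _ G => Or.inl ⟨∅, by simp⟩⟩
  | succ s ihs =>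
    intro t
    induction t with
    | zero => exact ⟨0, fun V _ _ _ G => Or.inr ⟨∅, by simp⟩⟩
    | succ t iht =>
      obtain ⟨N1, h1⟩ := ihs (t + 1)
      obtain ⟨N2, h2⟩ := iht
      refine ⟨N1 + N2 + 1, ?_⟩
      intro V _ _ hcard G
      classical
      have hpos : 0 < Fintype.card V := by omega
      obtain ⟨v⟩ := Fintype.card_pos_iff.mp hpos
      set A : Finset V := univ.filter (fun u => G.Adj v u) with hA
      set B : Finset V := univ.filter (fun u => u ≠ v ∧ ¬ G.Adj v u) with hB
      have hcards : A.card + B.card + 1 = Fintype.card V := by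
        have hdisj : Disjoint A B := by
          rw [Finset.disjoint_filter]
          rintro u _ hu ⟨_, hn⟩; exact hn hu
        have hunion : insert v (A ∪ B) = univ := by
          ext u
          simp only [Finset.mem_insert, Finset.mem_union, hA, hB, Finset.mem_filter,
            Finset.mem_univ, true_and, Finset.mem_univ, iff_true]
          by_cases h : u = v
          · exact Or.inl h
          · by_cases h2 : G.Adj v u
            · exact Or.inr (Or.inl h2)
            · exact Or.inr (Or.inr ⟨h, h2⟩)
        have hv : v ∉ A ∪ B := by
          simp [hA, hB]
        have := Finset.card_insert_of_notMem hv
        rw [hunion, Finset.card_union_of_disjoint hdisj] at this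
        rw [← Finset.card_univ, this]
      have hcase : N1 ≤ A.card ∨ N2 ≤ B.card := by omega
      rcases hcase with hc | hc
      · -- apply h1 to induced graph on A
        have hAcard : N1 ≤ Fintype.card (↥(A : Finset V)) := by
          rwa [Fintype.card_coe]
        rcases h1 A inferInstance inferInstance hAcard
            (G.comap (Function.Embedding.subtype _)) with ⟨C, hC⟩ | ⟨C, hC⟩
        · -- s-clique among neighbors of v: insert v
          left
          have hC' := isNClique_comap hC
          refine ⟨insert v (C.map (Function.Embedding.subtype _)), hC'.insert ?_⟩
          rintro b hb
          rw [Finset.mem_map] at hb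
          obtain ⟨⟨u, hu⟩, _, rfl⟩ := hb
          rw [hA, Finset.mem_filter] at hu
          exact hu.2
        · right
          rw [compl_comap] at hC
          exact ⟨C.map (Function.Embedding.subtype _), isNClique_comap hC⟩
      · have hBcard : N2 ≤ Fintype.card (↥(B : Finset V)) := by
          rwa [Fintype.card_coe]
        rcases h2 B inferInstance inferInstance hBcard
            (G.comap (Function.Embedding.subtype _)) with ⟨C, hC⟩ | ⟨C, hC⟩
        · left
          exact ⟨C.map (Function.Embedding.subtype _), isNClique_comap hC⟩
        · right
          rw [compl_comap] at hC
          have hC' := isNClique_comap hC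
          refine ⟨insert v (C.map (Function.Embedding.subtype _)), hC'.insert ?_⟩
          rintro b hb
          rw [Finset.mem_map] at hb
          obtain ⟨⟨u, hu⟩, _, rfl⟩ := hb
          rw [hB, Finset.mem_filter] at hu
          exact ⟨fun e => hu.2.1 e.symm, hu.2.2⟩

variable {n k : ℕ}

/-- number of `e`-containing sets inside a family -/
lemma count_supersets (hk : 2 ≤ k) (hkn : k ≤ n) {e : Finset (Fin n)}
    (he : e ∈ powersetCard 2 (univ : Finset (Fin n))) :
    ((powersetCard k (univ : Finset (Fin n))).filter (fun S => e ⊆ S)).card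
      = (n - 2).choose (k - 2) := by
  rw [Finset.mem_powersetCard] at he
  have hcount : ((powersetCard k (univ : Finset (Fin n))).filter (fun S => e ⊆ S)).card
      = (powersetCard (k - 2) ((univ : Finset (Fin n)) \ e)).card := by
    apply Finset.card_bij' (fun S _ => S \ e) (fun T _ => T ∪ e)
    · intro S hS
      rw [Finset.mem_filter, Finset.mem_powersetCard] at hS
      rw [Finset.mem_powersetCard]
      refine ⟨Finset.sdiff_subset_sdiff hS.1.1 le_rfl, ?_⟩
      rw [Finset.card_sdiff_of_subset hS.2, hS.1.2, he.2]
    · intro T hT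
      rw [Finset.mem_powersetCard] at hT
      have hdisj : Disjoint T e := by
        rw [Finset.disjoint_left]
        intro x hx hxe
        have := hT.1 hx
        rw [Finset.mem_sdiff] at this
        exact this.2 hxe
      rw [Finset.mem_filter, Finset.mem_powersetCard]
      refine ⟨⟨Finset.subset_univ _, ?_⟩, Finset.subset_union_right⟩
      rw [Finset.card_union_of_disjoint hdisj, hT.2, he.2]
      omega
    · intro S hS
      rw [Finset.mem_filter] at hS
      exact Finset.sdiff_union_of_subset hS.2
    · intro T hT
      rw [Finset.mem_powersetCard] at hT
      have hdisj : Disjoint T e := by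
        rw [Finset.disjoint_left]
        intro x hx
        have := hT.1 hx
        rw [Finset.mem_sdiff] at this
        exact this.2
      rw [Finset.union_sdiff_distrib, Finset.sdiff_self, Finset.union_empty,
        Finset.sdiff_eq_self_of_disjoint hdisj]
  rw [hcount, Finset.card_powersetCard, Finset.card_sdiff_of_subset (Finset.subset_univ _),
    Finset.card_univ, Fintype.card_fin, he.2]

lemma edges_within {S : Finset (Fin n)} :
    (powersetCard 2 (univ : Finset (Fin n))).filter (fun e => e ⊆ S)
      = powersetCard 2 S := by
  ext e
  simp only [Finset.mem_filter, Finset.mem_powersetCard, Finset.subset_univ, true_and]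
  tauto

lemma deg_add_deg (hS : S ∈ powersetCard k (univ : Finset (Fin n)))
    {G : Finset (Finset (Fin n))} (hG : G ⊆ powersetCard 2 (univ : Finset (Fin n))) :
    (G.filter (fun e => e ⊆ S)).card
      + (((powersetCard 2 (univ : Finset (Fin n))) \ G).filter (fun e => e ⊆ S)).card
      = k.choose 2 := by
  rw [← Finset.card_union_of_disjoint (by
      exact Finset.disjoint_filter_filter Finset.disjoint_sdiff),
    ← Finset.filter_union, Finset.union_sdiff_of_subset hG, edges_within,
    Finset.card_powersetCard, (Finset.mem_powersetCard.mp hS).2]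

-- half-angle factorization in ℂ
lemma cos_zero_iff_aux {γ : ℝ} (hγ : 0 < γ) {a b C : ℕ} (hab : a + b = C) (hC : 0 < C)
    (hγC : γ * C = π / 2) :
    (0 ≤ Real.cos (γ * ((a : ℝ) - b))) ∧
      (Real.cos (γ * ((a : ℝ) - b)) = 0 ↔ (a = 0 ∨ b = 0)) := by
  have hbound : |γ * ((a : ℝ) - b)| ≤ π / 2 := by
    rw [← hγC, abs_mul, abs_of_pos hγ]
    have : |(a : ℝ) - b| ≤ C := by
      rw [abs_sub_le_iff]
      constructor
      · have : (a : ℝ) ≤ C := by exact_mod_cast Nat.le.intro hab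
        have hb : (0:ℝ) ≤ b := by positivity
        linarith
      · have : (b : ℝ) ≤ C := by exact_mod_cast Nat.le.intro (by omega : b + a = C)
        have ha : (0:ℝ) ≤ a := by positivity
        linarith
    exact mul_le_mul_of_nonneg_left this hγ.le
  rw [abs_le] at hbound
  refine ⟨Real.cos_nonneg_of_mem_Icc ⟨by linarith [hbound.1], hbound.2⟩, ?_, ?_⟩
  · intro h0
    by_contra hcon
    push_neg at hcon
    have hlt : |γ * ((a : ℝ) - b)| < π / 2 := by
      rw [← hγC, abs_mul, abs_of_pos hγ]
      have : |(a : ℝ) - b| < C := by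
        rw [abs_sub_lt_iff]
        have h1 : (a:ℝ) + b = C := by exact_mod_cast hab
        have ha : (0:ℝ) < a := by exact_mod_cast Nat.pos_of_ne_zero hcon.1
        have hb : (0:ℝ) < b := by exact_mod_cast Nat.pos_of_ne_zero hcon.2
        constructor <;> linarith
      exact (mul_lt_mul_iff_right₀ hγ).mpr this
    rw [abs_lt] at hlt
    have := Real.cos_pos_of_mem_Ioo ⟨by linarith [hlt.1], hlt.2⟩
    linarith [this, h0.le, h0.ge]
  · intro h
    rcases h with h | h
    · subst h
      have hbC : (b : ℝ) = C := by
        have : b = C := by omega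
        exact_mod_cast this
      rw [show γ * (((0:ℕ):ℝ) - (b:ℝ)) = -(γ * (C:ℝ)) by rw [← hbC]; push_cast; ring,
        hγC, Real.cos_neg, Real.cos_pi_div_two]
    · subst h
      have haC : (a : ℝ) = C := by
        have : a = C := by omega
        exact_mod_cast this
      rw [show γ * ((a:ℝ) - ((0:ℕ):ℝ)) = γ * (C:ℝ) by rw [← haC]; push_cast; ring,
        hγC, Real.cos_pi_div_two]

lemma factorial_identity {n k : ℕ} (hk : 2 ≤ k) (hkn : k ≤ n) :
    (π * ((n - 2).factorial : ℝ)) / ((k.factorial : ℝ) * ((n - k).factorial : ℝ))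
      = π / ((k : ℝ) * ((k : ℝ) - 1)) * ((n - 2).choose (k - 2) : ℝ) := by
  have h1 : (n - 2).choose (k - 2) * (k - 2).factorial * ((n - 2) - (k - 2)).factorial
      = (n - 2).factorial := Nat.choose_mul_factorial_mul_factorial (by omega : k - 2 ≤ n - 2)
  have h2 : (n - 2) - (k - 2) = n - k := by omega
  rw [h2] at h1
  have h3 : k.factorial = k * (k - 1) * (k - 2).factorial := by
    obtain ⟨m, rfl⟩ : ∃ m, k = m + 2 := ⟨k - 2, by omega⟩
    simp [Nat.factorial_succ]
    ring
  have hf1 : (0:ℝ) < (k - 2).factorial := by exact_mod_cast Nat.factorial_pos _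
  have hf2 : (0:ℝ) < (n - k).factorial := by exact_mod_cast Nat.factorial_pos _
  have hk1 : (1:ℝ) ≤ (k:ℝ) := by exact_mod_cast hk.trans' (by norm_num)
  have hkR : ((k:ℝ) - 1) = ((k - 1 : ℕ) : ℝ) := by
    push_cast [Nat.cast_sub (by omega : 1 ≤ k)]; ring
  have h1R : ((n - 2).choose (k - 2) : ℝ) * ((k - 2).factorial : ℝ) * ((n - k).factorial : ℝ)
      = ((n - 2).factorial : ℝ) := by exact_mod_cast h1
  have h3R : (k.factorial : ℝ) = (k : ℝ) * ((k:ℝ) - 1) * ((k - 2).factorial : ℝ) := by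
    rw [hkR]; exact_mod_cast h3
  rw [h3R, ← h1R]
  have hkpos : (0:ℝ) < (k:ℝ) := by positivity
  have hk1pos : (0:ℝ) < (k:ℝ) - 1 := by
    have : (2:ℝ) ≤ (k:ℝ) := by exact_mod_cast hk
    linarith
  field_simp

lemma one_add_exp (x : ℝ) :
    1 + Complex.exp (((2 * x : ℝ) : ℂ) * Complex.I)
      = 2 * (Real.cos x : ℂ) * Complex.exp ((x : ℝ) * Complex.I) := by
  rw [Complex.exp_mul_I, Complex.exp_mul_I]
  push_cast
  rw [Complex.cos_two_mul, Complex.sin_two_mul]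
  ring

lemma sum_mult {n : ℕ} (G U : Finset (Finset (Fin n))) :
    ∑ e ∈ G, ((U.filter (fun S => e ⊆ S)).card : ℝ)
      = ∑ S ∈ U, ((G.filter (fun e => e ⊆ S)).card : ℝ) := by
  have h : ∑ e ∈ G, (U.filter (fun S => e ⊆ S)).card
      = ∑ S ∈ U, (G.filter (fun e => e ⊆ S)).card := by
    simp only [Finset.card_filter]
    exact Finset.sum_comm
  exact_mod_cast h

lemma sum_deg {n k : ℕ} (hk : 2 ≤ k) (hkn : k ≤ n) {G : Finset (Finset (Fin n))}
    (hG : G ⊆ powersetCard 2 (univ : Finset (Fin n))) :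
    ∑ S ∈ powersetCard k (univ : Finset (Fin n)), ((G.filter (fun e => e ⊆ S)).card : ℝ)
      = (G.card : ℝ) * ((n - 2).choose (k - 2) : ℝ) := by
  rw [← sum_mult]
  have h2 : ∀ e ∈ G, ((((powersetCard k (univ : Finset (Fin n))).filter
      (fun S => e ⊆ S)).card : ℕ) : ℝ) = (((n - 2).choose (k - 2) : ℕ) : ℝ) :=
    fun e he => by rw [count_supersets hk hkn (hG he)]
  rw [Finset.sum_congr rfl h2, Finset.sum_const, nsmul_eq_mul]

lemma innerSumExp {n k : ℕ} (hk : 2 ≤ k) (hkn : k ≤ n) (γ θ : ℝ)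
    (hθ : θ + γ * (((n - 2).choose (k - 2) : ℕ) : ℝ) = 0)
    {G : Finset (Finset (Fin n))} (hG : G ⊆ powersetCard 2 (univ : Finset (Fin n))) :
    ∑ U ∈ (powersetCard k (univ : Finset (Fin n))).powerset,
        Complex.exp ((((∑ e ∈ G, (θ + 2 * γ * ((U.filter fun S => e ⊆ S).card : ℝ)))
          - ∑ e ∈ (powersetCard 2 (univ : Finset (Fin n))) \ G,
              (θ + 2 * γ * ((U.filter fun S => e ⊆ S).card : ℝ)) : ℝ)) * Complex.I)
      = 2 ^ (powersetCard k (univ : Finset (Fin n))).card *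
          ∏ S ∈ powersetCard k (univ : Finset (Fin n)),
            ((Real.cos (γ * (((G.filter fun e => e ⊆ S).card : ℝ) -
              ((((powersetCard 2 (univ : Finset (Fin n))) \ G).filter fun e => e ⊆ S).card : ℝ))) : ℝ) : ℂ) := by
  set E := powersetCard 2 (univ : Finset (Fin n)) with hE
  set K := powersetCard k (univ : Finset (Fin n)) with hK
  set W : ℝ := (G.card : ℝ) - ((E \ G).card : ℝ) with hW
  set δ : Finset (Fin n) → ℝ := fun S => ((G.filter (fun e => e ⊆ S)).card : ℝ)
    - (((E \ G).filter (fun e => e ⊆ S)).card : ℝ) with hδ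
  -- step 1: rewrite the exponent
  have key : ∀ U ∈ K.powerset,
      ((∑ e ∈ G, (θ + 2 * γ * ((U.filter fun S => e ⊆ S).card : ℝ)))
          - ∑ e ∈ E \ G, (θ + 2 * γ * ((U.filter fun S => e ⊆ S).card : ℝ)))
        = θ * W + ∑ S ∈ U, (2 * (γ * δ S)) := by
    intro U _
    rw [Finset.sum_add_distrib, Finset.sum_add_distrib, Finset.sum_const, Finset.sum_const,
      ← Finset.mul_sum, ← Finset.mul_sum, sum_mult G U, sum_mult (E \ G) U]
    have : ∑ S ∈ U, 2 * (γ * δ S)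
        = 2 * γ * ((∑ S ∈ U, ((G.filter (fun e => e ⊆ S)).card : ℝ))
            - ∑ S ∈ U, (((E \ G).filter (fun e => e ⊆ S)).card : ℝ)) := by
      rw [← Finset.sum_sub_distrib, Finset.mul_sum]
      exact Finset.sum_congr rfl (fun S _ => by rw [hδ]; ring)
    rw [this, nsmul_eq_mul, nsmul_eq_mul, hW]
    ring
  rw [Finset.sum_congr rfl (fun U hU => by rw [key U hU])]
  -- step 2: split the exponential
  have split : ∀ U : Finset (Finset (Fin n)),
      Complex.exp (((θ * W + ∑ S ∈ U, (2 * (γ * δ S)) : ℝ)) * Complex.I)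
        = Complex.exp (((θ * W : ℝ)) * Complex.I)
            * ∏ S ∈ U, Complex.exp (((2 * (γ * δ S) : ℝ)) * Complex.I) := by
    intro U
    rw [← Complex.exp_sum, ← Complex.exp_add]
    congr 1
    push_cast
    rw [add_mul, Finset.sum_mul]
  rw [Finset.sum_congr rfl (fun U _ => split U), ← Finset.mul_sum]
  -- step 3: sum over powerset = product of (1 + x)
  have hprod : ∑ U ∈ K.powerset, ∏ S ∈ U, Complex.exp (((2 * (γ * δ S) : ℝ)) * Complex.I)
      = ∏ S ∈ K, (Complex.exp (((2 * (γ * δ S) : ℝ)) * Complex.I) + 1) := by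
    rw [Finset.prod_add]
    exact (Finset.sum_congr rfl (fun U _ => by simp)).symm
  rw [hprod]
  -- step 4: half-angle
  rw [Finset.prod_congr rfl (fun S _ => add_comm (Complex.exp (((2 * (γ * δ S) : ℝ)) * Complex.I)) 1)]
  rw [Finset.prod_congr rfl (fun S _ => one_add_exp (γ * δ S))]
  rw [Finset.prod_mul_distrib, Finset.prod_mul_distrib, Finset.prod_const,
    ← Complex.exp_sum]
  -- step 5: total phase vanishes
  have hsum : ∑ S ∈ K, ((γ * δ S : ℝ) : ℂ) * Complex.I
      = (((γ * (((n - 2).choose (k - 2) : ℕ) : ℝ) * W) : ℝ)) * Complex.I := by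
    rw [← Finset.sum_mul]
    congr 1
    rw [← Complex.ofReal_sum]
    congr 1
    have : ∑ S ∈ K, γ * δ S = γ * ∑ S ∈ K, δ S := by rw [Finset.mul_sum]
    rw [this]
    have hδsum : ∑ S ∈ K, δ S = (((n - 2).choose (k - 2) : ℕ) : ℝ) * W := by
      rw [hδ]
      simp only []
      rw [Finset.sum_sub_distrib, sum_deg hk hkn hG, sum_deg hk hkn Finset.sdiff_subset, hW]
      ring
    rw [hδsum]
    ring
  rw [hsum, ← mul_assoc, mul_comm (Complex.exp _), mul_assoc (_ * _), ← Complex.exp_add,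
    ← add_mul, ← Complex.ofReal_add]
  have : θ * W + γ * (((n - 2).choose (k - 2) : ℕ) : ℝ) * W = 0 := by
    have := hθ
    nlinarith [hθ]
  rw [this]
  simp only [Complex.ofReal_zero, zero_mul, Complex.exp_zero, mul_one]
  rfl

set_option maxHeartbeats 2000000 in
lemma main_identity (n k : ℕ) (hk : 2 ≤ k) (hkn : k ≤ n) :
    (∑ U ∈ (powersetCard k (univ : Finset (Fin n))).powerset,
        ∏ e ∈ powersetCard 2 (univ : Finset (Fin n)),
          Real.cos (-(π * ((n - 2).factorial : ℝ) /
              ((k.factorial : ℝ) * ((n - k).factorial : ℝ)))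
              + 2 * π / ((k : ℝ) * ((k : ℝ) - 1)) * ((U.filter fun S => e ⊆ S).card : ℝ)))
      = (2:ℝ) ^ (powersetCard k (univ : Finset (Fin n))).card
          / 2 ^ (powersetCard 2 (univ : Finset (Fin n))).card
          * ∑ G ∈ (powersetCard 2 (univ : Finset (Fin n))).powerset,
              ∏ S ∈ powersetCard k (univ : Finset (Fin n)),
                Real.cos (π / ((k : ℝ) * ((k : ℝ) - 1)) *
                  (((G.filter fun e => e ⊆ S).card : ℝ)
                    - ((((powersetCard 2 (univ : Finset (Fin n))) \ G).filter
                        fun e => e ⊆ S).card : ℝ))) := by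
  set γ : ℝ := π / ((k : ℝ) * ((k : ℝ) - 1)) with hγ
  set θ : ℝ := -(γ * (((n - 2).choose (k - 2) : ℕ) : ℝ)) with hθdef
  have hθ : θ + γ * (((n - 2).choose (k - 2) : ℕ) : ℝ) = 0 := by rw [hθdef]; ring
  -- rewrite the angles
  have hang : ∀ (U : Finset (Finset (Fin n))) (e : Finset (Fin n)),
      (-(π * ((n - 2).factorial : ℝ) / ((k.factorial : ℝ) * ((n - k).factorial : ℝ)))
          + 2 * π / ((k : ℝ) * ((k : ℝ) - 1)) * ((U.filter fun S => e ⊆ S).card : ℝ))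
        = θ + 2 * γ * ((U.filter fun S => e ⊆ S).card : ℝ) := by
    intro U e
    rw [hθdef, hγ, factorial_identity hk hkn]
    ring
  simp only [hang]
  -- pass to ℂ
  apply Complex.ofReal_injective
  push_cast
  calc
    (∑ U ∈ (powersetCard k (univ : Finset (Fin n))).powerset,
        ∏ e ∈ powersetCard 2 (univ : Finset (Fin n)),
          Complex.cos ((θ : ℂ) + 2 * (γ : ℂ) * ((U.filter fun S => e ⊆ S).card : ℂ)))
      = ∑ U ∈ (powersetCard k (univ : Finset (Fin n))).powerset,
          ((2:ℂ)⁻¹) ^ (powersetCard 2 (univ : Finset (Fin n))).card *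
          ∑ G ∈ (powersetCard 2 (univ : Finset (Fin n))).powerset,
            Complex.exp ((((∑ e ∈ G, (θ + 2 * γ * ((U.filter fun S => e ⊆ S).card : ℝ)))
              - ∑ e ∈ (powersetCard 2 (univ : Finset (Fin n))) \ G,
                  (θ + 2 * γ * ((U.filter fun S => e ⊆ S).card : ℝ)) : ℝ)) * Complex.I) := by
        refine Finset.sum_congr rfl (fun U _ => ?_)
        have step1 : ∀ e ∈ powersetCard 2 (univ : Finset (Fin n)),
            Complex.cos ((θ : ℂ) + 2 * (γ : ℂ) * ((U.filter fun S => e ⊆ S).card : ℂ))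
              = (Complex.exp (((θ + 2 * γ * ((U.filter fun S => e ⊆ S).card : ℝ) : ℝ)) * Complex.I)
                + Complex.exp ((-(θ + 2 * γ * ((U.filter fun S => e ⊆ S).card : ℝ) : ℝ)) * Complex.I)) * 2⁻¹ := by
          intro e _
          rw [show ((θ:ℂ) + 2 * (γ:ℂ) * ((U.filter fun S => e ⊆ S).card : ℂ))
              = ((θ + 2 * γ * ((U.filter fun S => e ⊆ S).card : ℝ) : ℝ) : ℂ) by push_cast; ring]
          rw [Complex.cos]
          push_cast
          ring
        rw [Finset.prod_congr rfl step1, Finset.prod_mul_distrib, Finset.prod_const,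
          mul_comm, Finset.prod_add]
        congr 1
        refine Finset.sum_congr rfl (fun G hG => ?_)
        rw [← Complex.exp_sum, ← Complex.exp_sum, ← Complex.exp_add]
        congr 1
        push_cast
        simp only [Finset.sum_mul, sub_mul, neg_mul, Finset.sum_neg_distrib, sub_eq_add_neg]
        rw [add_mul, neg_mul, ← Finset.sum_mul]
        congr 1
        exact congrArg Neg.neg (Finset.sum_mul _ _ _).symm
    _ = ((2:ℂ)⁻¹) ^ (powersetCard 2 (univ : Finset (Fin n))).card *
          ∑ G ∈ (powersetCard 2 (univ : Finset (Fin n))).powerset,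
          ∑ U ∈ (powersetCard k (univ : Finset (Fin n))).powerset,
            Complex.exp ((((∑ e ∈ G, (θ + 2 * γ * ((U.filter fun S => e ⊆ S).card : ℝ)))
              - ∑ e ∈ (powersetCard 2 (univ : Finset (Fin n))) \ G,
                  (θ + 2 * γ * ((U.filter fun S => e ⊆ S).card : ℝ)) : ℝ)) * Complex.I) := by
        rw [← Finset.mul_sum, Finset.sum_comm]
    _ = ((2:ℂ)⁻¹) ^ (powersetCard 2 (univ : Finset (Fin n))).card *
          ∑ G ∈ (powersetCard 2 (univ : Finset (Fin n))).powerset,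
            (2 ^ (powersetCard k (univ : Finset (Fin n))).card *
              ∏ S ∈ powersetCard k (univ : Finset (Fin n)),
                ((Real.cos (γ * (((G.filter fun e => e ⊆ S).card : ℝ) -
                  ((((powersetCard 2 (univ : Finset (Fin n))) \ G).filter
                    fun e => e ⊆ S).card : ℝ))) : ℝ) : ℂ)) := by
        refine congrArg _ (Finset.sum_congr rfl (fun G hG => ?_))
        exact innerSumExp hk hkn γ θ hθ (Finset.mem_powerset.mp hG)
    _ = (2:ℂ) ^ (powersetCard k (univ : Finset (Fin n))).card
          / 2 ^ (powersetCard 2 (univ : Finset (Fin n))).card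
          * ∑ G ∈ (powersetCard 2 (univ : Finset (Fin n))).powerset,
              ∏ S ∈ powersetCard k (univ : Finset (Fin n)),
                ((Real.cos (γ * (((G.filter fun e => e ⊆ S).card : ℝ)
                    - ((((powersetCard 2 (univ : Finset (Fin n))) \ G).filter
                        fun e => e ⊆ S).card : ℝ))) : ℝ) : ℂ) := by
        rw [← Finset.mul_sum, ← mul_assoc]
        congr 1
        rw [div_eq_mul_inv, mul_comm, inv_pow]
    _ = (2:ℂ) ^ (powersetCard k (univ : Finset (Fin n))).card
          / 2 ^ (powersetCard 2 (univ : Finset (Fin n))).card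
          * ∑ G ∈ (powersetCard 2 (univ : Finset (Fin n))).powerset,
              ∏ S ∈ powersetCard k (univ : Finset (Fin n)),
                Complex.cos ((γ : ℂ) * (((G.filter fun e => e ⊆ S).card : ℂ)
                    - ((((powersetCard 2 (univ : Finset (Fin n))) \ G).filter
                        fun e => e ⊆ S).card : ℂ))) := by
        refine congrArg _ (Finset.sum_congr rfl fun G _ => Finset.prod_congr rfl fun S _ => ?_)
        push_cast
        ring_nf

lemma sum_zero_iff (n k : ℕ) (hk : 2 ≤ k) (hkn : k ≤ n) :
    (∑ G ∈ (powersetCard 2 (univ : Finset (Fin n))).powerset,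
        ∏ S ∈ powersetCard k (univ : Finset (Fin n)),
          Real.cos (π / ((k : ℝ) * ((k : ℝ) - 1)) *
            (((G.filter fun e => e ⊆ S).card : ℝ)
              - ((((powersetCard 2 (univ : Finset (Fin n))) \ G).filter
                  fun e => e ⊆ S).card : ℝ))) = 0)
      ↔ ∀ G ∈ (powersetCard 2 (univ : Finset (Fin n))).powerset,
          ∃ S ∈ powersetCard k (univ : Finset (Fin n)),
            (G.filter fun e => e ⊆ S).card = 0 ∨ (G.filter fun e => e ⊆ S).card = k.choose 2 := by
  have hk0 : (0:ℝ) < (k:ℝ) := by positivity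
  have hk1 : (0:ℝ) < (k:ℝ) - 1 := by
    have : (2:ℝ) ≤ (k:ℝ) := by exact_mod_cast hk
    linarith
  have hγ : 0 < π / ((k : ℝ) * ((k : ℝ) - 1)) := by positivity
  have hC : 0 < k.choose 2 := Nat.choose_pos hk
  have hγC : π / ((k : ℝ) * ((k : ℝ) - 1)) * (k.choose 2 : ℝ) = π / 2 := by
    rw [Nat.cast_choose_two]
    field_simp
  have haux : ∀ G ∈ (powersetCard 2 (univ : Finset (Fin n))).powerset,
      ∀ S ∈ powersetCard k (univ : Finset (Fin n)),
      (0 ≤ Real.cos (π / ((k : ℝ) * ((k : ℝ) - 1)) *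
            (((G.filter fun e => e ⊆ S).card : ℝ)
              - ((((powersetCard 2 (univ : Finset (Fin n))) \ G).filter
                  fun e => e ⊆ S).card : ℝ)))) ∧
        (Real.cos (π / ((k : ℝ) * ((k : ℝ) - 1)) *
            (((G.filter fun e => e ⊆ S).card : ℝ)
              - ((((powersetCard 2 (univ : Finset (Fin n))) \ G).filter
                  fun e => e ⊆ S).card : ℝ))) = 0
          ↔ ((G.filter fun e => e ⊆ S).card = 0
              ∨ (G.filter fun e => e ⊆ S).card = k.choose 2)) := by
    intro G hG S hS
    have hab := deg_add_deg hS (Finset.mem_powerset.mp hG)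
    obtain ⟨h1, h2⟩ := cos_zero_iff_aux hγ hab hC hγC
    refine ⟨h1, h2.trans ?_⟩
    constructor
    · rintro (h | h)
      · exact Or.inl h
      · right; omega
    · rintro (h | h)
      · exact Or.inl h
      · right; omega
  rw [Finset.sum_eq_zero_iff_of_nonneg (fun G hG =>
    Finset.prod_nonneg (fun S hS => (haux G hG S hS).1))]
  constructor
  · intro h G hG
    have := h G hG
    rw [Finset.prod_eq_zero_iff] at this
    obtain ⟨S, hS, hcos⟩ := this
    exact ⟨S, hS, ((haux G hG S hS).2).mp hcos⟩
  · intro h G hG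
    obtain ⟨S, hS, hcase⟩ := h G hG
    rw [Finset.prod_eq_zero_iff]
    exact ⟨S, hS, ((haux G hG S hS).2).mpr hcase⟩

lemma pair_mem_powersetCard_two {n : ℕ} {u v : Fin n} {S : Finset (Fin n)}
    (hu : u ∈ S) (hv : v ∈ S) (huv : u ≠ v) :
    ({u, v} : Finset (Fin n)) ∈ powersetCard 2 S := by
  rw [Finset.mem_powersetCard]
  refine ⟨?_, Finset.card_pair huv⟩
  intro x hx
  simp only [Finset.mem_insert, Finset.mem_singleton] at hx
  rcases hx with rfl | rfl
  · exact hu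
  · exact hv

lemma pair_pred_of_adj {n : ℕ} {H : SimpleGraph (Fin n)} {u v : Fin n} (hadj : H.Adj u v) :
    ∀ a ∈ ({u, v} : Finset (Fin n)), ∀ b ∈ ({u, v} : Finset (Fin n)), a ≠ b → H.Adj a b := by
  intro a ha b hb hab
  simp only [Finset.mem_insert, Finset.mem_singleton] at ha hb
  rcases ha with rfl | rfl <;> rcases hb with rfl | rfl
  · exact absurd rfl hab
  · exact hadj
  · exact hadj.symm
  · exact absurd rfl hab

lemma graph_iff (n k : ℕ) (hk : 2 ≤ k) (hkn : k ≤ n) :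
    (∀ G ∈ (powersetCard 2 (univ : Finset (Fin n))).powerset,
        ∃ S ∈ powersetCard k (univ : Finset (Fin n)),
          (G.filter fun e => e ⊆ S).card = 0 ∨ (G.filter fun e => e ⊆ S).card = k.choose 2)
      ↔ ∀ H : SimpleGraph (Fin n),
          (∃ s : Finset (Fin n), H.IsNClique k s) ∨ (∃ s : Finset (Fin n), Hᶜ.IsNClique k s) := by
  have hsub : ∀ (G : Finset (Finset (Fin n))), G ⊆ powersetCard 2 (univ : Finset (Fin n)) →
      ∀ S : Finset (Fin n), (G.filter fun e => e ⊆ S) ⊆ powersetCard 2 S := by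
    intro G hG S e he
    rw [Finset.mem_filter] at he
    rw [Finset.mem_powersetCard]
    have := hG he.1
    rw [Finset.mem_powersetCard] at this
    exact ⟨he.2, this.2⟩
  constructor
  · intro h H
    classical
    set G := (powersetCard 2 (univ : Finset (Fin n))).filter
      (fun e => ∀ u ∈ e, ∀ v ∈ e, u ≠ v → H.Adj u v) with hGdef
    obtain ⟨S, hS, hcase⟩ := h G (Finset.mem_powerset.mpr (Finset.filter_subset _ _))
    rw [Finset.mem_powersetCard] at hS
    rcases hcase with h0 | hfull
    · right
      refine ⟨S, ?_, hS.2⟩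
      intro u hu v hv huv
      rw [Finset.mem_coe] at hu hv
      refine ⟨huv, fun hadj => ?_⟩
      have hmem : ({u, v} : Finset (Fin n)) ∈ G.filter (fun e => e ⊆ S) := by
        rw [Finset.mem_filter, hGdef, Finset.mem_filter]
        refine ⟨⟨by
          rw [Finset.mem_powersetCard]
          exact ⟨Finset.subset_univ _, Finset.card_pair huv⟩,
          pair_pred_of_adj hadj⟩, ?_⟩
        intro x hx
        simp only [Finset.mem_insert, Finset.mem_singleton] at hx
        rcases hx with rfl | rfl
        · exact hu
        · exact hv
      rw [Finset.card_eq_zero] at h0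
      rw [h0] at hmem
      exact absurd hmem (Finset.notMem_empty _)
    · left
      refine ⟨S, ?_, hS.2⟩
      intro u hu v hv huv
      rw [Finset.mem_coe] at hu hv
      have hfull' : G.filter (fun e => e ⊆ S) = powersetCard 2 S := by
        apply Finset.eq_of_subset_of_card_le
          (hsub G (Finset.filter_subset _ _) S)
        rw [Finset.card_powersetCard, hS.2, hfull]
      have hmem : ({u, v} : Finset (Fin n)) ∈ G.filter (fun e => e ⊆ S) := by
        rw [hfull']; exact pair_mem_powersetCard_two hu hv huv
      rw [Finset.mem_filter, hGdef, Finset.mem_filter] at hmem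
      exact hmem.1.2 u (Finset.mem_insert_self _ _) v
        (Finset.mem_insert_of_mem (Finset.mem_singleton_self _)) huv
  · intro h G hG
    rw [Finset.mem_powerset] at hG
    classical
    set H : SimpleGraph (Fin n) :=
      { Adj := fun u v => u ≠ v ∧ ({u, v} : Finset (Fin n)) ∈ G
        symm := by
          constructor
          intro u v ⟨h1, h2⟩
          exact ⟨h1.symm, by rwa [Finset.pair_comm]⟩
        loopless := by constructor; intro u ⟨h1, _⟩; exact h1 rfl } with hHdef
    rcases h H with ⟨s, hs⟩ | ⟨s, hs⟩
    · refine ⟨s, Finset.mem_powersetCard.mpr ⟨Finset.subset_univ _, hs.2⟩, Or.inr ?_⟩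
      have : G.filter (fun e => e ⊆ s) = powersetCard 2 s := by
        apply Finset.Subset.antisymm (hsub G hG s)
        intro e he
        rw [Finset.mem_powersetCard] at he
        obtain ⟨u, v, huv, rfl⟩ := Finset.card_eq_two.mp he.2
        have hu : u ∈ s := he.1 (Finset.mem_insert_self _ _)
        have hv : v ∈ s := he.1 (Finset.mem_insert_of_mem (Finset.mem_singleton_self _))
        have hadj := hs.1 (Finset.mem_coe.mpr hu) (Finset.mem_coe.mpr hv) huv
        rw [Finset.mem_filter]
        exact ⟨hadj.2, he.1⟩
      rw [this, Finset.card_powersetCard, hs.2]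
    · refine ⟨s, Finset.mem_powersetCard.mpr ⟨Finset.subset_univ _, hs.2⟩, Or.inl ?_⟩
      rw [Finset.card_eq_zero, Finset.filter_eq_empty_iff]
      intro e he
      intro hes
      have heE := hG he
      rw [Finset.mem_powersetCard] at heE
      obtain ⟨u, v, huv, rfl⟩ := Finset.card_eq_two.mp heE.2
      have hu : u ∈ s := hes (Finset.mem_insert_self _ _)
      have hv : v ∈ s := hes (Finset.mem_insert_of_mem (Finset.mem_singleton_self _))
      have hadj := hs.1 (Finset.mem_coe.mpr hu) (Finset.mem_coe.mpr hv) huv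
      rw [SimpleGraph.compl_adj] at hadj
      exact hadj.2 ⟨huv, he⟩

lemma ramsey_le_iff (n k : ℕ) (hk : 2 ≤ k) (hkn : k ≤ n) :
    diagonalRamsey k ≤ n ↔ ∀ H : SimpleGraph (Fin n),
      (∃ s : Finset (Fin n), H.IsNClique k s) ∨ (∃ s : Finset (Fin n), Hᶜ.IsNClique k s) := by
  constructor
  · intro hle H
    obtain ⟨N, hN⟩ := ramseyProp_exists k k
    have hmem : (max N 1) ∈ {n : ℕ | 0 < n ∧ ∀ G : SimpleGraph (Fin n),
        (∃ s : Finset (Fin n), G.IsNClique k s) ∨ (∃ s : Finset (Fin n), Gᶜ.IsNClique k s)} := by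
      refine ⟨by omega, fun G => ?_⟩
      exact hN (Fin (max N 1)) inferInstance inferInstance
        (by rw [Fintype.card_fin]; exact le_max_left _ _) G
    have hne : {n : ℕ | 0 < n ∧ ∀ G : SimpleGraph (Fin n),
        (∃ s : Finset (Fin n), G.IsNClique k s) ∨ (∃ s : Finset (Fin n), Gᶜ.IsNClique k s)}.Nonempty :=
      ⟨_, hmem⟩
    have hmem2 : 0 < diagonalRamsey k ∧ ∀ G : SimpleGraph (Fin (diagonalRamsey k)),
        (∃ s : Finset (Fin (diagonalRamsey k)), G.IsNClique k s) ∨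
          (∃ s : Finset (Fin (diagonalRamsey k)), Gᶜ.IsNClique k s) := Nat.sInf_mem hne
    have hmn : diagonalRamsey k ≤ n := hle
    rcases hmem2.2 (H.comap (Fin.castLEEmb hmn)) with ⟨s, hs⟩ | ⟨s, hs⟩
    · exact Or.inl ⟨s.map _, isNClique_comap hs⟩
    · right
      rw [compl_comap] at hs
      exact ⟨s.map _, isNClique_comap hs⟩
  · intro h
    exact Nat.sInf_le ⟨by omega, h⟩

theorem stmt_4 (n k : ℕ) (hk : 2 ≤ k) (hkn : k ≤ n) :
    diagonalRamsey k ≤ n ↔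
      (∑ U ∈ (Finset.powersetCard k (Finset.univ : Finset (Fin n))).powerset,
        ∏ e ∈ Finset.powersetCard 2 (Finset.univ : Finset (Fin n)),
          Real.cos
            (-(Real.pi * ((n - 2).factorial : ℝ) /
                ((k.factorial : ℝ) * ((n - k).factorial : ℝ))) +
              2 * Real.pi / ((k : ℝ) * ((k : ℝ) - 1)) *
                ((U.filter fun S => e ⊆ S).card : ℝ))) = 0 := by
  rw [ramsey_le_iff n k hk hkn, ← graph_iff n k hk hkn, ← sum_zero_iff n k hk hkn,
    main_identity n k hk hkn]
  have hpos : (0:ℝ) < (2:ℝ) ^ (powersetCard k (univ : Finset (Fin n))).card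
      / 2 ^ (powersetCard 2 (univ : Finset (Fin n))).card := by positivity
  constructor
  · intro h
    rw [h, mul_zero]
  · intro h
    rcases mul_eq_zero.mp h with h | h
    · exact absurd h (ne_of_gt hpos)
    · exact h
end
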